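/- Let q(z) = 1/(1 + e^z) and W(s) = ½ s²(1−s)². Let V, H, c ∈ ℝ and a, b ≥ 0, and let U_i, U_j : ℝ → ℝ be twice continuously differentiable with U_i, U_i′, U_i″, U_j, U_j′, U_j″ bounded on ℝ. Assume that for all z ∈ ℝ: V q′(z) = c H q′(z) + a (U_i″(z) − W″(q(z)) U_i(z)) − b (U_j″(z) − W″(q(z)) U_j(z)). Then V = c H. -/

import Mathlib

open Real Filter

noncomputable def pp (z : ℝ) : ℝ := -(Real.exp z) / (1 + Real.exp z)^2
noncomputable def pp' (z : ℝ) : ℝ := ((Real.exp z)^2 - Real.exp z) / (1 + Real.exp z)^3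
noncomputable def cc (z : ℝ) : ℝ :=
  6 * (1 / (1 + Real.exp z))^2 - 6 * (1 / (1 + Real.exp z)) + 1
noncomputable def GG (a b : ℝ) (Ui Uj : ℝ → ℝ) (z : ℝ) : ℝ :=
  (a * deriv Ui z - b * deriv Uj z) * pp z - (a * Ui z - b * Uj z) * pp' z

lemma one_add_exp_pos (z : ℝ) : 0 < 1 + Real.exp z := by positivity

lemma one_add_exp_ne (z : ℝ) : (1 + Real.exp z) ≠ 0 := (one_add_exp_pos z).ne'

lemma hasDerivAt_q (z : ℝ) : HasDerivAt (fun z => 1 / (1 + Real.exp z)) (pp z) z := by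
  have h : HasDerivAt (fun z : ℝ => 1 + Real.exp z) (Real.exp z) z :=
    (Real.hasDerivAt_exp z).const_add 1
  have h2 := h.inv (one_add_exp_ne z)
  unfold pp
  simp only [one_div]
  exact h2

lemma hasDerivAt_pp (z : ℝ) : HasDerivAt pp (pp' z) z := by
  have hn : HasDerivAt (fun z : ℝ => -(Real.exp z)) (-(Real.exp z)) z :=
    (Real.hasDerivAt_exp z).neg
  have hb : HasDerivAt (fun z : ℝ => 1 + Real.exp z) (Real.exp z) z :=
    (Real.hasDerivAt_exp z).const_add 1
  have hd : HasDerivAt (fun z : ℝ => (1 + Real.exp z)^2)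
      (2 * (1 + Real.exp z) ^ 1 * Real.exp z) z := by
    simpa using hb.fun_pow 2
  have h := hn.fun_div hd (by positivity)
  refine h.congr_deriv ?_
  have h1 : (1 + Real.exp z) ≠ 0 := one_add_exp_ne z
  unfold pp'
  field_simp
  ring

lemma hasDerivAt_pp' (z : ℝ) : HasDerivAt pp' (cc z * pp z) z := by
  have he := Real.hasDerivAt_exp z
  have hn : HasDerivAt (fun z : ℝ => (Real.exp z)^2 - Real.exp z)
      (2 * (Real.exp z) ^ 1 * Real.exp z - Real.exp z) z := (he.pow 2).sub he
  have hb : HasDerivAt (fun z : ℝ => 1 + Real.exp z) (Real.exp z) z := he.const_add 1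
  have hd : HasDerivAt (fun z : ℝ => (1 + Real.exp z)^3)
      (3 * (1 + Real.exp z) ^ 2 * Real.exp z) z := by
    simpa using hb.fun_pow 3
  have h := hn.fun_div hd (by positivity)
  refine h.congr_deriv ?_
  have h1 : (1 + Real.exp z) ≠ 0 := one_add_exp_ne z
  unfold pp cc
  field_simp
  ring

lemma pp_ne (z : ℝ) : pp z ≠ 0 := by
  unfold pp
  have h1 := Real.exp_pos z
  have h2 := one_add_exp_pos z
  intro h
  rw [div_eq_zero_iff] at h
  rcases h with h | h
  · linarith
  · nlinarith

lemma pp_continuous : Continuous pp := by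
  unfold pp
  exact (Real.continuous_exp.neg).div
    ((continuous_const.add Real.continuous_exp).pow 2) (fun z => by positivity)

lemma abs_pp_le (z : ℝ) : |pp z| ≤ Real.exp (-|z|) := by
  have hu := Real.exp_pos z
  have hd := one_add_exp_pos z
  have habs : |pp z| = Real.exp z / (1 + Real.exp z)^2 := by
    unfold pp
    rw [abs_div, abs_neg, abs_of_pos hu, abs_of_pos (by positivity)]
  rw [habs]
  rcases le_or_gt 0 z with hz | hz
  · rw [abs_of_nonneg hz, Real.exp_neg, div_le_iff₀ (by positivity),
      inv_mul_eq_div, le_div_iff₀ hu]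
    nlinarith [sq_nonneg (1 - Real.exp z)]
  · rw [abs_of_neg hz, neg_neg, div_le_iff₀ (by positivity)]
    nlinarith [mul_pos hu hu, mul_pos (mul_pos hu hu) hu]

lemma abs_pp'_le (z : ℝ) : |pp' z| ≤ Real.exp (-|z|) := by
  refine le_trans ?_ (abs_pp_le z)
  have hu := Real.exp_pos z
  have hd := one_add_exp_pos z
  unfold pp pp'
  rw [abs_div, abs_div, abs_neg, abs_of_pos hu,
    abs_of_pos (show (0:ℝ) < (1 + Real.exp z)^2 by positivity),
    abs_of_pos (show (0:ℝ) < (1 + Real.exp z)^3 by positivity),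
    div_le_div_iff₀ (by positivity) (by positivity)]
  rcases abs_cases ((Real.exp z)^2 - Real.exp z) with ⟨h, _⟩ | ⟨h, _⟩ <;> rw [h] <;> nlinarith

theorem stmt11 (q W : ℝ → ℝ)
    (hq : ∀ z, q z = 1 / (1 + Real.exp z))
    (hW : ∀ s, W s = (1/2) * s^2 * (1-s)^2)
    (V H c a b : ℝ) (ha : 0 ≤ a) (hb : 0 ≤ b)
    (Ui Uj : ℝ → ℝ) (hUi : ContDiff ℝ 2 Ui) (hUj : ContDiff ℝ 2 Uj)
    (hUib : ∃ C, ∀ z, |Ui z| ≤ C) (hUi'b : ∃ C, ∀ z, |deriv Ui z| ≤ C)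
    (hUi''b : ∃ C, ∀ z, |deriv (deriv Ui) z| ≤ C)
    (hUjb : ∃ C, ∀ z, |Uj z| ≤ C) (hUj'b : ∃ C, ∀ z, |deriv Uj z| ≤ C)
    (hUj''b : ∃ C, ∀ z, |deriv (deriv Uj) z| ≤ C)
    (heq : ∀ z, V * deriv q z = c * H * deriv q z
      + a * (deriv (deriv Ui) z - deriv (deriv W) (q z) * Ui z)
      - b * (deriv (deriv Uj) z - deriv (deriv W) (q z) * Uj z)) :
    V = c * H := by
  have hqfun : q = fun z => 1 / (1 + Real.exp z) := funext hq
  have hWfun : W = fun s => (1/2) * s^2 * (1-s)^2 := funext hW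
  have hderivq : ∀ z, deriv q z = pp z := by
    intro z; rw [hqfun]; exact (hasDerivAt_q z).deriv
  -- second derivative of W
  have hW' : deriv W = fun s => 2*s^3 - 3*s^2 + s := by
    funext s
    rw [hWfun]
    have h1 : HasDerivAt (fun s : ℝ => (1/2) * s^2) ((1/2) * (2 * s ^ 1)) s :=
      (hasDerivAt_pow 2 s).const_mul (1/2)
    have h2 : HasDerivAt (fun s : ℝ => (1-s)^2) (2 * (1-s) ^ 1 * (-1)) s := by
      simpa using (((hasDerivAt_id s).const_sub 1).fun_pow 2)
    rw [(h1.fun_mul h2).deriv]; ring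
  have hW'' : ∀ s, deriv (deriv W) s = 6*s^2 - 6*s + 1 := by
    intro s
    rw [hW']
    have h1 : HasDerivAt (fun s : ℝ => 2*s^3 - 3*s^2 + s)
        (2 * (3 * s ^ 2) - 3 * (2 * s ^ 1) + 1) s :=
      (((hasDerivAt_pow 3 s).const_mul 2).sub ((hasDerivAt_pow 2 s).const_mul 3)).add
        (hasDerivAt_id s)
    rw [h1.deriv]; ring
  have hW''q : ∀ z, deriv (deriv W) (q z) = cc z := by
    intro z; rw [hW'', hq z]; unfold cc; ring
  -- differentiability of Ui, Uj
  have hUi2 : ContDiff ℝ ((1:ℕ) + 1) Ui := by exact_mod_cast hUi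
  have hUj2 : ContDiff ℝ ((1:ℕ) + 1) Uj := by exact_mod_cast hUj
  have hUid : Differentiable ℝ Ui := (contDiff_succ_iff_deriv.mp hUi2).1
  have hUjd : Differentiable ℝ Uj := (contDiff_succ_iff_deriv.mp hUj2).1
  have hUid' : Differentiable ℝ (deriv Ui) :=
    ((contDiff_succ_iff_deriv.mp hUi2).2.2).differentiable (by simp)
  have hUjd' : Differentiable ℝ (deriv Uj) :=
    ((contDiff_succ_iff_deriv.mp hUj2).2.2).differentiable (by simp)
  have hFd : ∀ z, HasDerivAt (fun z => a * Ui z - b * Uj z)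
      (a * deriv Ui z - b * deriv Uj z) z := fun z =>
    ((hUid z).hasDerivAt.const_mul a).sub ((hUjd z).hasDerivAt.const_mul b)
  have hFd' : ∀ z, HasDerivAt (fun z => a * deriv Ui z - b * deriv Uj z)
      (a * deriv (deriv Ui) z - b * deriv (deriv Uj) z) z := fun z =>
    ((hUid' z).hasDerivAt.const_mul a).sub ((hUjd' z).hasDerivAt.const_mul b)
  -- the pointwise ODE
  have hFeq : ∀ z, a * deriv (deriv Ui) z - b * deriv (deriv Uj) z
      = cc z * (a * Ui z - b * Uj z) + (V - c * H) * pp z := by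
    intro z
    have h := heq z
    rw [hderivq z, hW''q z] at h
    linear_combination -h
  -- the Wronskian has derivative (V - cH) pp²
  have hGd : ∀ z, HasDerivAt (GG a b Ui Uj) ((V - c * H) * pp z ^ 2) z := by
    intro z
    have h := ((hFd' z).mul (hasDerivAt_pp z)).sub ((hFd z).mul (hasDerivAt_pp' z))
    have : GG a b Ui Uj = fun z =>
        (a * deriv Ui z - b * deriv Uj z) * pp z - (a * Ui z - b * Uj z) * pp' z := rfl
    rw [this]
    refine h.congr_deriv ?_
    linear_combination (pp z) * hFeq z
  -- integrate
  have hint : ∀ R : ℝ, IntervalIntegrable (fun z => (V - c * H) * pp z ^ 2)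
      MeasureTheory.volume (-R) R :=
    fun R => (continuous_const.mul (pp_continuous.pow 2)).intervalIntegrable _ _
  have hJint : ∀ R : ℝ, IntervalIntegrable (fun z => pp z ^ 2)
      MeasureTheory.volume (-R) R :=
    fun R => ((pp_continuous.pow 2)).intervalIntegrable _ _
  have key : ∀ R : ℝ, (V - c * H) * ∫ z in (-R)..R, pp z ^ 2
      = GG a b Ui Uj R - GG a b Ui Uj (-R) := by
    intro R
    rw [← intervalIntegral.integral_const_mul]
    exact intervalIntegral.integral_eq_sub_of_hasDerivAt (fun x _ => hGd x) (hint R)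
  set J : ℝ → ℝ := fun R => ∫ z in (-R)..R, pp z ^ 2 with hJdef
  have hJ1 : 0 < J 1 := by
    apply intervalIntegral.intervalIntegral_pos_of_pos_on (hJint 1)
    · intro x _
      exact pow_two_pos_of_ne_zero (pp_ne x)
    · norm_num
  have hJmono : ∀ R : ℝ, 1 ≤ R → J 1 ≤ J R := by
    intro R hR
    apply intervalIntegral.integral_mono_interval (by linarith) (by linarith) hR
    · filter_upwards with x using sq_nonneg _
    · exact hJint R
  -- bounds
  obtain ⟨Ci, hCi⟩ := hUib
  obtain ⟨Cj, hCj⟩ := hUjb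
  obtain ⟨Ci', hCi'⟩ := hUi'b
  obtain ⟨Cj', hCj'⟩ := hUj'b
  have hCi0 : 0 ≤ Ci := le_trans (abs_nonneg _) (hCi 0)
  have hCj0 : 0 ≤ Cj := le_trans (abs_nonneg _) (hCj 0)
  have hCi'0 : 0 ≤ Ci' := le_trans (abs_nonneg _) (hCi' 0)
  have hCj'0 : 0 ≤ Cj' := le_trans (abs_nonneg _) (hCj' 0)
  set M : ℝ := a * Ci + b * Cj + a * Ci' + b * Cj' + 1 with hMdef
  have hM0 : 0 < M := by positivity
  have hFb : ∀ z, |a * Ui z - b * Uj z| ≤ M := by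
    intro z
    have h1 : |a * Ui z| ≤ a * Ci := by
      rw [abs_mul, abs_of_nonneg ha]; exact mul_le_mul_of_nonneg_left (hCi z) ha
    have h2 : |b * Uj z| ≤ b * Cj := by
      rw [abs_mul, abs_of_nonneg hb]; exact mul_le_mul_of_nonneg_left (hCj z) hb
    calc |a * Ui z - b * Uj z| ≤ |a * Ui z| + |b * Uj z| := abs_sub _ _
      _ ≤ M := by rw [hMdef]; nlinarith [mul_nonneg ha hCi'0, mul_nonneg hb hCj'0]
  have hF'b : ∀ z, |a * deriv Ui z - b * deriv Uj z| ≤ M := by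
    intro z
    have h1 : |a * deriv Ui z| ≤ a * Ci' := by
      rw [abs_mul, abs_of_nonneg ha]; exact mul_le_mul_of_nonneg_left (hCi' z) ha
    have h2 : |b * deriv Uj z| ≤ b * Cj' := by
      rw [abs_mul, abs_of_nonneg hb]; exact mul_le_mul_of_nonneg_left (hCj' z) hb
    calc |a * deriv Ui z - b * deriv Uj z| ≤ |a * deriv Ui z| + |b * deriv Uj z| := abs_sub _ _
      _ ≤ M := by rw [hMdef]; nlinarith [mul_nonneg ha hCi0, mul_nonneg hb hCj0]
  have hGb : ∀ z, |GG a b Ui Uj z| ≤ 2 * M * Real.exp (-|z|) := by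
    intro z
    have h1 : |(a * deriv Ui z - b * deriv Uj z) * pp z| ≤ M * Real.exp (-|z|) := by
      rw [abs_mul]
      exact mul_le_mul (hF'b z) (abs_pp_le z) (abs_nonneg _) hM0.le
    have h2 : |(a * Ui z - b * Uj z) * pp' z| ≤ M * Real.exp (-|z|) := by
      rw [abs_mul]
      exact mul_le_mul (hFb z) (abs_pp'_le z) (abs_nonneg _) hM0.le
    calc |GG a b Ui Uj z|
        ≤ |(a * deriv Ui z - b * deriv Uj z) * pp z|
          + |(a * Ui z - b * Uj z) * pp' z| := abs_sub _ _
      _ ≤ 2 * M * Real.exp (-|z|) := by linarith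
  -- limit R → ∞
  have hbound : ∀ R : ℝ, 1 ≤ R → |V - c * H| * J 1 ≤ 4 * M * Real.exp (-R) := by
    intro R hR
    have hJR : 0 ≤ J R := le_trans hJ1.le (hJmono R hR)
    have h1 : |V - c * H| * J 1 ≤ |V - c * H| * J R :=
      mul_le_mul_of_nonneg_left (hJmono R hR) (abs_nonneg _)
    have h2 : |V - c * H| * J R = |(V - c * H) * J R| := by
      rw [abs_mul, abs_of_nonneg hJR]
    have h3 : (V - c * H) * J R = GG a b Ui Uj R - GG a b Ui Uj (-R) := key R
    have h4 : |GG a b Ui Uj R - GG a b Ui Uj (-R)|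
        ≤ |GG a b Ui Uj R| + |GG a b Ui Uj (-R)| := abs_sub _ _
    have h5 : |GG a b Ui Uj R| ≤ 2 * M * Real.exp (-R) := by
      have h := hGb R
      rwa [abs_of_nonneg (show (0:ℝ) ≤ R by linarith)] at h
    have h6 : |GG a b Ui Uj (-R)| ≤ 2 * M * Real.exp (-R) := by
      have h := hGb (-R)
      rwa [abs_neg, abs_of_nonneg (show (0:ℝ) ≤ R by linarith)] at h
    calc |V - c * H| * J 1 ≤ |(V - c * H) * J R| := by rw [← h2]; exact h1
      _ = |GG a b Ui Uj R - GG a b Ui Uj (-R)| := by rw [h3]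
      _ ≤ 4 * M * Real.exp (-R) := by linarith
  have htend : Tendsto (fun R : ℝ => 4 * M * Real.exp (-R)) atTop (nhds 0) := by
    have h := Real.tendsto_exp_neg_atTop_nhds_zero.const_mul (4 * M)
    simpa using h
  have hle : |V - c * H| * J 1 ≤ 0 :=
    ge_of_tendsto htend (eventually_atTop.mpr ⟨1, hbound⟩)
  have hk0 : V - c * H = 0 := by
    by_contra h
    have : 0 < |V - c * H| * J 1 := mul_pos (abs_pos.mpr h) hJ1
    linarith
  linarith
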